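/- Suppose each expert i ∈ N = {1,...,n} has a Bewley preference ≻ᵢ with representation (u, Cᵢ), and the decision maker's relation ≻₀ is either a hope-and-prepare preference with concordant representation (u, C₀, C₀) or a Bewley preference with representation (u, C₀), with the same u. Then the Pareto condition holds if and only if C₀ ⊆ co(⋃_{i=1}^n Cᵢ). -/

import Mathlib

/-!
Framework: Anscombe–Aumann acts, finitely additive probability measures,
simple acts, hope-and-prepare preferences (Bastianello–Hill style setup).
-/

open Set

section Framework

variable (S : Type*) [MeasurableSpace S]

/-- The measurable sets (events) of `S`, as a subtype. -/
abbrev MSet := {A : Set S // MeasurableSet A}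

/-- Finitely additive probability measures on `(S, Σ)`, viewed as real-valued
set functions on events.  The weak* topology is the topology of pointwise
convergence on events, i.e. the product topology on `MSet S → ℝ`. -/
def ProbCharges : Set (MSet S → ℝ) :=
  {p | (∀ A, 0 ≤ p A) ∧ p ⟨Set.univ, MeasurableSet.univ⟩ = 1 ∧
    ∀ A B : MSet S, Disjoint A.1 B.1 → p ⟨A.1 ∪ B.1, A.2.union B.2⟩ = p A + p B}

end Framework

section Fns

variable {S : Type*} [MeasurableSpace S]

/-- `φ : S → ℝ` is a measurable simple function (an element of `B₀(Σ)`). -/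
def IsSimpleFn (φ : S → ℝ) : Prop :=
  (Set.range φ).Finite ∧ ∀ y : ℝ, MeasurableSet (φ ⁻¹' {y})

/-- The integral `∫ φ dp` of a simple function `φ` against a finitely additive
measure `p` (junk value `0` if `φ` is not simple). -/
noncomputable def fInt (p : MSet S → ℝ) (φ : S → ℝ) : ℝ :=
  @dite _ (IsSimpleFn φ) (Classical.dec _)
    (fun h => ∑ y ∈ h.1.toFinset, y * p ⟨φ ⁻¹' {y}, h.2 y⟩) (fun _ => 0)

/-- A functional `I : B₀(Σ) → ℝ` is monotonic. -/
def MonotonicFn (I : (S → ℝ) → ℝ) : Prop :=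
  ∀ φ ψ, IsSimpleFn φ → IsSimpleFn ψ → (∀ s, φ s ≤ ψ s) → I φ ≤ I ψ

/-- A functional `I : B₀(Σ) → ℝ` is constant-linear: `I(aφ + b) = a I(φ) + b`
for `a ≥ 0`, `b ∈ ℝ`. -/
def ConstLinearFn (I : (S → ℝ) → ℝ) : Prop :=
  ∀ φ, IsSimpleFn φ → ∀ a : ℝ, 0 ≤ a → ∀ b : ℝ,
    I (fun s => a * φ s + b) = a * I φ + b

end Fns

section Acts

variable {S : Type*} [MeasurableSpace S] {V : Type*} [AddCommGroup V] [Module ℝ V]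

/-- `f : S → V` is a simple act with outcomes in `X`: it is `X`-valued,
takes finitely many values and is `Σ`-measurable. -/
def IsAct (X : Set V) (f : S → V) : Prop :=
  (∀ s, f s ∈ X) ∧ (Set.range f).Finite ∧ ∀ v : V, MeasurableSet (f ⁻¹' {v})

/-- Pointwise mixture `αf + (1-α)g` of two acts. -/
def mixAct (α : ℝ) (f g : S → V) : S → V := fun s => α • f s + (1 - α) • g s

/-- The constant act with outcome `x`. -/
def constAct (S : Type*) {V : Type*} (x : V) : S → V := fun _ => x

/-- `u : V → ℝ` is affine on the convex set `X`. -/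
def IsAffineOn (u : V → ℝ) (X : Set V) : Prop :=
  ∀ x ∈ X, ∀ y ∈ X, ∀ α : ℝ, 0 ≤ α → α ≤ 1 →
    u (α • x + (1 - α) • y) = α * u x + (1 - α) * u y

/-- `u` is non-constant on `X`. -/
def NonConstOn (u : V → ℝ) (X : Set V) : Prop := ∃ x ∈ X, ∃ y ∈ X, u x ≠ u y

/-- Expected utility `∫ u(f) dp` of the act `f` under the measure `p`. -/
noncomputable def EU (u : V → ℝ) (f : S → V) (p : MSet S → ℝ) : ℝ :=
  fInt p (fun s => u (f s))

/-- Worst-case expected utility of `f` over the set of scenarios `C`. -/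
noncomputable def minEU (u : V → ℝ) (C : Set (MSet S → ℝ)) (f : S → V) : ℝ :=
  sInf (EU u f '' C)

/-- Best-case expected utility of `f` over the set of scenarios `D`. -/
noncomputable def maxEU (u : V → ℝ) (D : Set (MSet S → ℝ)) (f : S → V) : ℝ :=
  sSup (EU u f '' D)

/-- `f` and `g` are incomparable (`f ⋈ g`). -/
def Incomp (R : (S → V) → (S → V) → Prop) (f g : S → V) : Prop := ¬ R f g ∧ ¬ R g f

end Acts

section Axioms

variable {S : Type*} [MeasurableSpace S] {V : Type*} [AddCommGroup V] [Module ℝ V]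
variable (X : Set V) (R : (S → V) → (S → V) → Prop)

/-- Axiom 1: `≻` is asymmetric and transitive on acts, and its restriction to
constant acts is non-trivial and negatively transitive. -/
def PrefAx1 : Prop :=
  (∀ f g, IsAct X f → IsAct X g → R f g → ¬ R g f) ∧
  (∀ f g h, IsAct X f → IsAct X g → IsAct X h → R f g → R g h → R f h) ∧
  (∃ x ∈ X, ∃ y ∈ X, R (constAct S x) (constAct S y)) ∧
  (∀ x ∈ X, ∀ y ∈ X, ∀ z ∈ X, ¬ R (constAct S x) (constAct S y) →
    ¬ R (constAct S y) (constAct S z) → ¬ R (constAct S x) (constAct S z))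

/-- Axiom 2 (continuity). -/
def PrefAx2 : Prop :=
  ∀ f g h, IsAct X f → IsAct X g → IsAct X h →
    IsOpen {α : Set.Icc (0 : ℝ) 1 | R (mixAct (α : ℝ) f g) h} ∧
    IsOpen {α : Set.Icc (0 : ℝ) 1 | R h (mixAct (α : ℝ) f g)}

/-- Axiom 3 (certainty independence). -/
def PrefAx3 : Prop :=
  ∀ f g, IsAct X f → IsAct X g → ∀ x ∈ X, ∀ α : ℝ, 0 < α → α < 1 →
    (R f g ↔ R (mixAct α f (constAct S x)) (mixAct α g (constAct S x)))

/-- Axiom 4: for any outcome `x`, the upper and lower contour sets at the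
constant act `x` are convex. -/
def PrefAx4 : Prop :=
  ∀ x ∈ X,
    (∀ f g, IsAct X f → IsAct X g → R f (constAct S x) → R g (constAct S x) →
      ∀ α : ℝ, 0 ≤ α → α ≤ 1 → R (mixAct α f g) (constAct S x)) ∧
    (∀ f g, IsAct X f → IsAct X g → R (constAct S x) f → R (constAct S x) g →
      ∀ α : ℝ, 0 ≤ α → α ≤ 1 → R (constAct S x) (mixAct α f g))

/-- Axiom 5 (monotonicity). -/
def PrefAx5 : Prop :=
  ∀ f g, IsAct X f → IsAct X g →
    (∀ s : S, R (constAct S (f s)) (constAct S (g s))) → R f g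

/-- Axiom 6: if every outcome incomparable to `f` is incomparable to `g`,
then `f` and `g` are incomparable. -/
def PrefAx6 : Prop :=
  ∀ f g, IsAct X f → IsAct X g →
    (∀ x ∈ X, Incomp R f (constAct S x) → Incomp R g (constAct S x)) → Incomp R f g

/-- Axiom 7: if `f ⋈ x`, `x ≻ g`, `g ⋈ y` and `f ≻ y`, then `f ≻ g`. -/
def PrefAx7 : Prop :=
  ∀ f g, IsAct X f → IsAct X g → ∀ x ∈ X, ∀ y ∈ X,
    Incomp R f (constAct S x) → R (constAct S x) g →
    Incomp R g (constAct S y) → R f (constAct S y) → R f g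

end Axioms

section Reps

variable {S : Type*} [MeasurableSpace S] {V : Type*} [AddCommGroup V] [Module ℝ V]

/-- `(u, C, D)` is a hope-and-prepare representation of `R`. -/
def IsHPRep (X : Set V) (R : (S → V) → (S → V) → Prop) (u : V → ℝ)
    (C D : Set (MSet S → ℝ)) : Prop :=
  IsAffineOn u X ∧ NonConstOn u X ∧
  C.Nonempty ∧ D.Nonempty ∧ C ⊆ ProbCharges S ∧ D ⊆ ProbCharges S ∧
  IsCompact C ∧ IsCompact D ∧ Convex ℝ C ∧ Convex ℝ D ∧ (C ∩ D).Nonempty ∧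
  ∀ f g, IsAct X f → IsAct X g →
    (R f g ↔ (minEU u C g < minEU u C f ∧ maxEU u D g < maxEU u D f))

/-- `(u, C)` is a Bewley representation of `R`. -/
def IsBewleyRep (X : Set V) (R : (S → V) → (S → V) → Prop) (u : V → ℝ)
    (C : Set (MSet S → ℝ)) : Prop :=
  IsAffineOn u X ∧ NonConstOn u X ∧
  C.Nonempty ∧ C ⊆ ProbCharges S ∧ IsCompact C ∧ Convex ℝ C ∧
  ∀ f g, IsAct X f → IsAct X g → (R f g ↔ ∀ p ∈ C, EU u g p < EU u f p)

/-- `(u, C, D)` is a twofold multi-prior representation of `R`. -/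
def IsTwofoldRep (X : Set V) (R : (S → V) → (S → V) → Prop) (u : V → ℝ)
    (C D : Set (MSet S → ℝ)) : Prop :=
  IsAffineOn u X ∧ NonConstOn u X ∧
  C.Nonempty ∧ D.Nonempty ∧ C ⊆ ProbCharges S ∧ D ⊆ ProbCharges S ∧
  IsCompact C ∧ IsCompact D ∧ Convex ℝ C ∧ Convex ℝ D ∧ (C ∩ D).Nonempty ∧
  ∀ f g, IsAct X f → IsAct X g → (R f g ↔ maxEU u D g < minEU u C f)

end Reps


set_option linter.unusedSectionVars false
section Aux1

variable {S : Type*} [MeasurableSpace S]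

lemma pc_congr (p : MSet S → ℝ) {A B : Set S} (hA : MeasurableSet A)
    (hB : MeasurableSet B) (h : A = B) : p ⟨A, hA⟩ = p ⟨B, hB⟩ := by
  subst h; rfl

lemma pc_empty {p : MSet S → ℝ} (hp : p ∈ ProbCharges S) :
    p ⟨∅, MeasurableSet.empty⟩ = 0 := by
  have h := hp.2.2 ⟨∅, MeasurableSet.empty⟩ ⟨∅, MeasurableSet.empty⟩ (by simp)
  have h2 : p ⟨(∅ : Set S) ∪ ∅, MeasurableSet.empty.union MeasurableSet.empty⟩
      = p ⟨∅, MeasurableSet.empty⟩ := pc_congr p _ _ (by simp)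
  rw [h2] at h
  linarith

/-- Finite additivity over a `Finset`-indexed family of pairwise disjoint sets. -/
lemma pc_biUnion {p : MSet S → ℝ} (hp : p ∈ ProbCharges S) {ι : Type*}
    (t : Finset ι) (B : ι → Set S) (hB : ∀ i, MeasurableSet (B i))
    (hd : ∀ i ∈ t, ∀ j ∈ t, i ≠ j → Disjoint (B i) (B j)) :
    p ⟨⋃ i ∈ t, B i, t.measurableSet_biUnion (fun i _ => hB i)⟩
      = ∑ i ∈ t, p ⟨B i, hB i⟩ := by
  classical
  induction t using Finset.induction with
  | empty =>
      rw [Finset.sum_empty]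
      rw [pc_congr p _ MeasurableSet.empty (by simp)]
      exact pc_empty hp
  | @insert a t ha ih =>
      have hdisj : Disjoint (B a) (⋃ i ∈ t, B i) := by
        rw [Set.disjoint_iUnion_right]
        intro i
        rw [Set.disjoint_iUnion_right]
        intro hi
        exact hd a (Finset.mem_insert_self a t) i (Finset.mem_insert_of_mem hi)
          (fun h => ha (h ▸ hi))
      have hadd := hp.2.2 ⟨B a, hB a⟩ ⟨⋃ i ∈ t, B i, t.measurableSet_biUnion
        (fun i _ => hB i)⟩ hdisj
      rw [Finset.sum_insert ha, ← ih (fun i hi => fun j hj hij =>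
        hd i (Finset.mem_insert_of_mem hi) j (Finset.mem_insert_of_mem hj) hij), ← hadd]
      exact pc_congr p _ _ (by simp [Set.biUnion_insert])

end Aux1
section Aux2

variable {S : Type*} [MeasurableSpace S]

lemma preim_comp_eq {ι : Type*} [Fintype ι] (idx : S → ι) (v : ι → ℝ) (y : ℝ) :
    (fun s => v (idx s)) ⁻¹' {y}
      = ⋃ σ ∈ Finset.univ.filter (fun σ => v σ = y), idx ⁻¹' {σ} := by
  classical
  ext s
  simp only [Set.mem_preimage, Set.mem_singleton_iff, Set.mem_iUnion, Finset.mem_filter]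
  constructor
  · intro h; exact ⟨idx s, ⟨⟨Finset.mem_univ _, h⟩, rfl⟩⟩
  · rintro ⟨σ, ⟨⟨-, hv⟩, hσ⟩⟩
    rw [hσ, hv]

lemma isSimpleFn_comp {ι : Type*} [Fintype ι] (idx : S → ι)
    (h : ∀ σ, MeasurableSet (idx ⁻¹' {σ})) (v : ι → ℝ) :
    IsSimpleFn (fun s => v (idx s)) := by
  classical
  constructor
  · exact (Set.finite_range v).subset (by rintro y ⟨s, rfl⟩; exact ⟨idx s, rfl⟩)
  · intro y
    rw [preim_comp_eq idx v y]
    exact Finset.measurableSet_biUnion _ (fun σ _ => h σ)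

lemma fInt_comp {ι : Type*} [Fintype ι] (idx : S → ι)
    (h : ∀ σ, MeasurableSet (idx ⁻¹' {σ})) (v : ι → ℝ)
    {p : MSet S → ℝ} (hp : p ∈ ProbCharges S) :
    fInt p (fun s => v (idx s)) = ∑ σ : ι, v σ * p ⟨idx ⁻¹' {σ}, h σ⟩ := by
  classical
  have hs := isSimpleFn_comp idx h v
  rw [fInt, dif_pos hs]
  set φ := fun s => v (idx s) with hφ
  set T := hs.1.toFinset with hT
  have key : ∀ y ∈ T, y * p ⟨φ ⁻¹' {y}, hs.2 y⟩
      = ∑ σ ∈ Finset.univ.filter (fun σ => v σ = y), v σ * p ⟨idx ⁻¹' {σ}, h σ⟩ := by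
    intro y _
    have hpy : p ⟨φ ⁻¹' {y}, hs.2 y⟩
        = ∑ σ ∈ Finset.univ.filter (fun σ => v σ = y), p ⟨idx ⁻¹' {σ}, h σ⟩ := by
      rw [pc_congr p (hs.2 y) (Finset.measurableSet_biUnion _ (fun σ _ => h σ))
        (preim_comp_eq idx v y)]
      exact pc_biUnion hp _ _ h (fun i _ j _ hij =>
        Set.disjoint_left.2 (fun s hsi hsj => hij (by
          simp only [Set.mem_preimage, Set.mem_singleton_iff] at hsi hsj
          rw [← hsi, ← hsj])))
    rw [hpy, Finset.mul_sum]
    refine Finset.sum_congr rfl (fun σ hσ => ?_)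
    rw [(Finset.mem_filter.1 hσ).2]
  rw [Finset.sum_congr rfl key]
  have hmaps : ∀ σ ∈ Finset.univ.filter (fun σ => v σ ∈ T), v σ ∈ T :=
    fun σ hσ => (Finset.mem_filter.1 hσ).2
  have hfib := Finset.sum_fiberwise_of_maps_to hmaps
    (fun σ => v σ * p ⟨idx ⁻¹' {σ}, h σ⟩)
  have hinner : ∀ y ∈ T,
      (Finset.univ.filter (fun σ => v σ ∈ T)).filter (fun σ => v σ = y)
        = Finset.univ.filter (fun σ => v σ = y) := by
    intro y hy
    rw [Finset.filter_filter]
    exact Finset.filter_congr (fun σ _ => by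
      constructor
      · rintro ⟨-, h2⟩; exact h2
      · intro h2; exact ⟨h2 ▸ hy, h2⟩)
  rw [← Finset.sum_congr rfl (fun y hy => by rw [← hinner y hy]), hfib]
  refine Finset.sum_subset (Finset.filter_subset _ _) (fun σ _ hσ => ?_)
  have hv : v σ ∉ T := by
    intro hvT
    exact hσ (Finset.mem_filter.2 ⟨Finset.mem_univ _, hvT⟩)
  have hempty : idx ⁻¹' {σ} = ∅ := by
    rw [Set.eq_empty_iff_forall_notMem]
    intro s hsmem
    simp only [Set.mem_preimage, Set.mem_singleton_iff] at hsmem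
    exact hv (by rw [hT, Set.Finite.mem_toFinset]; exact ⟨s, by rw [hφ]; simp [hsmem]⟩)
  rw [pc_congr p (h σ) MeasurableSet.empty hempty, pc_empty hp, mul_zero]

end Aux2
section Aux3

variable {S : Type*} [MeasurableSpace S]

lemma fInt_const {p : MSet S → ℝ} (hp : p ∈ ProbCharges S) (c : ℝ) :
    fInt p (fun _ => c) = c := by
  have hmeas : ∀ σ : Unit, MeasurableSet ((fun _ : S => σ) ⁻¹' {σ}) := by
    intro σ
    have : ((fun _ : S => σ) ⁻¹' {σ}) = Set.univ := by
      ext s; simp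
    rw [this]; exact MeasurableSet.univ
  have := fInt_comp (fun _ : S => ()) hmeas (fun _ => c) hp
  simp only [Finset.univ_unique, Finset.sum_singleton] at this
  rw [this, pc_congr p _ MeasurableSet.univ (by ext s; simp), hp.2.1, mul_one]

lemma fInt_smul_add {φ : S → ℝ} (hφ : IsSimpleFn φ) (a b : ℝ) (p q : MSet S → ℝ) :
    fInt (a • p + b • q) φ = a * fInt p φ + b * fInt q φ := by
  rw [fInt, fInt, fInt, dif_pos hφ, dif_pos hφ, dif_pos hφ,
    Finset.mul_sum, Finset.mul_sum, ← Finset.sum_add_distrib]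
  refine Finset.sum_congr rfl (fun y _ => ?_)
  simp only [Pi.add_apply, Pi.smul_apply, smul_eq_mul]
  ring

lemma fInt_continuous {φ : S → ℝ} (hφ : IsSimpleFn φ) :
    Continuous (fun p : MSet S → ℝ => fInt p φ) := by
  have : (fun p : MSet S → ℝ => fInt p φ)
      = fun p => ∑ y ∈ hφ.1.toFinset, y * p ⟨φ ⁻¹' {y}, hφ.2 y⟩ := by
    funext p; rw [fInt, dif_pos hφ]
  rw [this]
  exact continuous_finset_sum _ (fun y _ =>
    continuous_const.mul (continuous_apply _))

variable {V : Type*} [AddCommGroup V] [Module ℝ V]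

lemma isSimpleFn_act {X : Set V} {f : S → V} (hf : IsAct X f) (u : V → ℝ) :
    IsSimpleFn (fun s => u (f s)) := by
  obtain ⟨-, hfin, hmeas⟩ := hf
  constructor
  · exact (hfin.image u).subset (by rintro y ⟨s, rfl⟩; exact ⟨f s, ⟨s, rfl⟩, rfl⟩)
  · intro y
    have : (fun s => u (f s)) ⁻¹' {y} = ⋃ v ∈ {v | v ∈ Set.range f ∧ u v = y}, f ⁻¹' {v} := by
      ext s
      simp only [Set.mem_preimage, Set.mem_singleton_iff, Set.mem_iUnion, Set.mem_setOf_eq]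
      constructor
      · intro h; exact ⟨f s, ⟨⟨s, rfl⟩, h⟩, rfl⟩
      · rintro ⟨v, ⟨⟨-, hv⟩, hsv⟩⟩; rw [hsv, hv]
    rw [this]
    exact MeasurableSet.biUnion ((hfin.subset (Set.sep_subset _ _)).countable)
      (fun v _ => hmeas v)

lemma EU_const {p : MSet S → ℝ} (hp : p ∈ ProbCharges S) (u : V → ℝ) (z : V) :
    EU u (constAct S z) p = u z := fInt_const hp (u z)

lemma EU_lin {X : Set V} {f : S → V} (hf : IsAct X f) (u : V → ℝ) (a b : ℝ)
    (p q : MSet S → ℝ) :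
    EU u f (a • p + b • q) = a * EU u f p + b * EU u f q :=
  fInt_smul_add (isSimpleFn_act hf u) a b p q

/-- Strict EU-dominance everywhere on a union propagates to the convex hull. -/
lemma hull_dominance {X : Set V} {f g : S → V} (hf : IsAct X f) (hg : IsAct X g)
    (u : V → ℝ) (U : Set (MSet S → ℝ))
    (h : ∀ p ∈ U, EU u g p < EU u f p) :
    ∀ p ∈ convexHull ℝ U, EU u g p < EU u f p := by
  have hconv : Convex ℝ {p : MSet S → ℝ | EU u g p < EU u f p} := by
    intro p hp q hq a b ha hb hab
    simp only [Set.mem_setOf_eq] at hp hq ⊢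
    rw [EU_lin hf u a b p q, EU_lin hg u a b p q]
    rcases eq_or_lt_of_le ha with h0 | h0
    · have hb1 : b = 1 := by linarith
      rw [← h0, hb1]; simpa using hq
    · rcases eq_or_lt_of_le hb with h1 | h1
      · have ha1 : a = 1 := by linarith
        rw [← h1, ha1]; simpa using hp
      · nlinarith [hp, hq]
  exact fun p hp => convexHull_min h hconv hp

lemma minEU_lt {X : Set V} {f g : S → V} (hf : IsAct X f) (hg : IsAct X g)
    (u : V → ℝ) {C : Set (MSet S → ℝ)} (hne : C.Nonempty) (hcomp : IsCompact C)
    (h : ∀ p ∈ C, EU u g p < EU u f p) : minEU u C g < minEU u C f := by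
  obtain ⟨p₀, hp₀, hmin⟩ := hcomp.exists_isMinOn hne
    ((fInt_continuous (isSimpleFn_act hf u)).continuousOn)
  have h1 : minEU u C f = EU u f p₀ := by
    refine le_antisymm (csInf_le ?_ ⟨p₀, hp₀, rfl⟩) (le_csInf (hne.image _) ?_)
    · exact ⟨EU u f p₀, by rintro y ⟨q, hq, rfl⟩; exact hmin hq⟩
    · rintro y ⟨q, hq, rfl⟩; exact hmin hq
  have h2 : minEU u C g ≤ EU u g p₀ := by
    refine csInf_le ?_ ⟨p₀, hp₀, rfl⟩
    obtain ⟨p₁, hp₁, hmin₁⟩ := hcomp.exists_isMinOn hne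
      ((fInt_continuous (isSimpleFn_act hg u)).continuousOn)
    exact ⟨EU u g p₁, by rintro y ⟨q, hq, rfl⟩; exact hmin₁ hq⟩
  calc minEU u C g ≤ EU u g p₀ := h2
    _ < EU u f p₀ := h p₀ hp₀
    _ = minEU u C f := h1.symm

lemma maxEU_lt {X : Set V} {f g : S → V} (hf : IsAct X f) (hg : IsAct X g)
    (u : V → ℝ) {C : Set (MSet S → ℝ)} (hne : C.Nonempty) (hcomp : IsCompact C)
    (h : ∀ p ∈ C, EU u g p < EU u f p) : maxEU u C g < maxEU u C f := by
  obtain ⟨p₀, hp₀, hmax⟩ := hcomp.exists_isMaxOn hne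
    ((fInt_continuous (isSimpleFn_act hg u)).continuousOn)
  have h1 : maxEU u C g = EU u g p₀ := by
    refine le_antisymm (csSup_le (hne.image _) ?_) (le_csSup ?_ ⟨p₀, hp₀, rfl⟩)
    · rintro y ⟨q, hq, rfl⟩; exact hmax hq
    · exact ⟨EU u g p₀, by rintro y ⟨q, hq, rfl⟩; exact hmax hq⟩
  have h2 : EU u f p₀ ≤ maxEU u C f := by
    refine le_csSup ?_ ⟨p₀, hp₀, rfl⟩
    obtain ⟨p₁, hp₁, hmax₁⟩ := hcomp.exists_isMaxOn hne
      ((fInt_continuous (isSimpleFn_act hf u)).continuousOn)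
    exact ⟨EU u f p₁, by rintro y ⟨q, hq, rfl⟩; exact hmax₁ hq⟩
  calc maxEU u C g = EU u g p₀ := h1
    _ < EU u f p₀ := h p₀ hp₀
    _ ≤ maxEU u C f := h2

lemma maxEU_const {C : Set (MSet S → ℝ)} (hne : C.Nonempty)
    (hC : C ⊆ ProbCharges S) (u : V → ℝ) (z : V) :
    maxEU u C (constAct S z) = u z := by
  have : EU u (constAct S z) '' C = {u z} := by
    apply Set.eq_singleton_iff_nonempty_unique_mem.2
    exact ⟨(hne.image _), by rintro y ⟨q, hq, rfl⟩; exact EU_const (hC hq) u z⟩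
  rw [maxEU, this, csSup_singleton]

lemma le_maxEU {X : Set V} {f : S → V} (hf : IsAct X f) (u : V → ℝ)
    {C : Set (MSet S → ℝ)} (hcomp : IsCompact C) {q : MSet S → ℝ} (hq : q ∈ C) :
    EU u f q ≤ maxEU u C f := by
  refine le_csSup ?_ ⟨q, hq, rfl⟩
  exact (hcomp.image (fInt_continuous (isSimpleFn_act hf u))).bddAbove

end Aux3
section Aux4

variable {E : Type*} [AddCommGroup E] [Module ℝ E] [TopologicalSpace E]
  [IsTopologicalAddGroup E] [ContinuousSMul ℝ E]

lemma convexHull_iUnion_eq_image {n : ℕ} (hn : 0 < n) (C : Fin n → Set E)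
    (hne : ∀ i, (C i).Nonempty) (hconv : ∀ i, Convex ℝ (C i)) :
    convexHull ℝ (⋃ i, C i)
      = (fun θ : (Fin n → ℝ) × (Fin n → E) => ∑ i, θ.1 i • θ.2 i) ''
        (stdSimplex ℝ (Fin n) ×ˢ Set.univ.pi C) := by
  classical
  apply Set.Subset.antisymm
  · intro x hx
    rw [convexHull_eq] at hx
    obtain ⟨ι, t, w, z, hw0, hw1, hz, hcm⟩ := hx
    have hcm' : ∑ i ∈ t, w i • z i = x := by
      rw [← hcm, Finset.centerMass_eq_of_sum_1 _ _ hw1]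
    set k : ι → Fin n := fun i =>
      if h : z i ∈ ⋃ j, C j then (Set.mem_iUnion.1 h).choose else ⟨0, hn⟩ with hk
    have hkmem : ∀ i ∈ t, z i ∈ C (k i) := by
      intro i hi
      rw [hk]
      simp only [dif_pos (hz i hi)]
      exact (Set.mem_iUnion.1 (hz i hi)).choose_spec
    set w' : Fin n → ℝ := fun j => ∑ i ∈ t.filter (fun i => k i = j), w i with hw'
    have hw'0 : ∀ j, 0 ≤ w' j := fun j =>
      Finset.sum_nonneg (fun i hi => hw0 i (Finset.mem_of_mem_filter i hi))
    have hw'1 : ∑ j, w' j = 1 := by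
      rw [hw']
      rw [Finset.sum_fiberwise_of_maps_to (fun i _ => Finset.mem_univ (k i)) w]
      exact hw1
    set P : Fin n → E := fun j =>
      if h : 0 < w' j then (t.filter (fun i => k i = j)).centerMass w z
      else (hne j).choose with hP
    have hPmem : ∀ j, P j ∈ C j := by
      intro j
      rw [hP]
      by_cases h : 0 < w' j
      · simp only [dif_pos h]
        exact (hconv j).centerMass_mem
          (fun i hi => hw0 i (Finset.mem_of_mem_filter i hi)) h
          (fun i hi => (Finset.mem_filter.1 hi).2 ▸ hkmem i (Finset.mem_filter.1 hi).1)
      · simp only [dif_neg h]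
        exact (hne j).choose_spec
    have hkey : ∀ j, w' j • P j = ∑ i ∈ t.filter (fun i => k i = j), w i • z i := by
      intro j
      by_cases h : 0 < w' j
      · rw [hP]
        simp only [dif_pos h]
        rw [Finset.centerMass, smul_smul, mul_inv_cancel₀ (ne_of_gt h), one_smul]
      · have h0 : w' j = 0 := le_antisymm (not_lt.1 h) (hw'0 j)
        rw [h0, zero_smul]
        refine (Finset.sum_eq_zero (fun i hi => ?_)).symm
        have : w i = 0 := by
          have := (Finset.sum_eq_zero_iff_of_nonneg
            (fun i hi => hw0 i (Finset.mem_of_mem_filter i hi))).1 h0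
          exact this i hi
        rw [this, zero_smul]
    refine ⟨(w', P), ⟨⟨hw'0, hw'1⟩, fun j _ => hPmem j⟩, ?_⟩
    simp only
    rw [Finset.sum_congr rfl (fun j _ => hkey j),
      Finset.sum_fiberwise_of_maps_to (fun i _ => Finset.mem_univ (k i))]
    exact hcm'
  · rintro x ⟨⟨w, P⟩, ⟨⟨hw0, hw1⟩, hPmem⟩, rfl⟩
    exact (convex_convexHull ℝ _).sum_mem (fun i _ => hw0 i) hw1
      (fun i _ => subset_convexHull ℝ _ (Set.mem_iUnion.2 ⟨i, hPmem i (Set.mem_univ i)⟩))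

lemma isCompact_convexHull_iUnion [T2Space E] {n : ℕ} (hn : 0 < n) (C : Fin n → Set E)
    (hne : ∀ i, (C i).Nonempty) (hcomp : ∀ i, IsCompact (C i))
    (hconv : ∀ i, Convex ℝ (C i)) : IsCompact (convexHull ℝ (⋃ i, C i)) := by
  rw [convexHull_iUnion_eq_image hn C hne hconv]
  refine ((isCompact_stdSimplex ℝ _).prod (isCompact_univ_pi hcomp)).image ?_
  exact continuous_finset_sum _ (fun i _ =>
    (((continuous_apply i).comp continuous_fst).smul
      ((continuous_apply i).comp continuous_snd)))

end Aux4
section Aux5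

/-- Any continuous linear functional on `ι → ℝ` (product topology) is a finite
linear combination of coordinate evaluations. -/
lemma clm_pi_repr {ι : Type*} (L : (ι → ℝ) →L[ℝ] ℝ) :
    ∃ (I : Finset ι) (a : ι → ℝ), ∀ p, L p = ∑ j ∈ I, a j * p j := by
  classical
  have hU : IsOpen (L ⁻¹' Set.Ioo (-1 : ℝ) 1) :=
    (isOpen_Ioo).preimage L.continuous
  have h0 : (0 : ι → ℝ) ∈ L ⁻¹' Set.Ioo (-1 : ℝ) 1 := by
    simp [Set.mem_preimage, map_zero]
  obtain ⟨I, u', hIu, hpi⟩ := isOpen_pi_iff.1 hU 0 h0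
  have hker : ∀ r : ι → ℝ, (∀ j ∈ I, r j = 0) → L r = 0 := by
    intro r hr
    by_contra hL
    have hmem : (2 / L r) • r ∈ (I : Set ι).pi u' := by
      intro j hj
      have : ((2 / L r) • r) j = 0 := by
        simp [hr j hj]
      rw [this]
      have := (hIu j hj).2
      simpa using this
    have := hpi hmem
    simp only [Set.mem_preimage, map_smul, smul_eq_mul, Set.mem_Ioo] at this
    rw [div_mul_cancel₀ 2 hL] at this
    linarith [this.2]
  refine ⟨I, fun j => L (Pi.single j 1), fun p => ?_⟩
  have hdecomp : p = (p - ∑ j ∈ I, Pi.single j (p j)) + ∑ j ∈ I, Pi.single j (p j) := by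
    ring
  have hr : ∀ j ∈ I, (p - ∑ j' ∈ I, Pi.single j' (p j')) j = 0 := by
    intro j hj
    simp only [Pi.sub_apply, Finset.sum_apply]
    have : ∑ j' ∈ I, Pi.single j' (p j') j = p j := by
      rw [Finset.sum_congr rfl (fun j' _ => Pi.single_apply j' (p j') j)]
      rw [Finset.sum_ite_eq I j (fun j' => p j')]
      simp [hj]
    rw [this, sub_self]
  calc L p = L ((p - ∑ j ∈ I, Pi.single j (p j)) + ∑ j ∈ I, Pi.single j (p j)) := by
        rw [← hdecomp]
    _ = L (p - ∑ j ∈ I, Pi.single j (p j)) + L (∑ j ∈ I, Pi.single j (p j)) := map_add _ _ _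
    _ = ∑ j ∈ I, L (Pi.single j (p j)) := by rw [hker _ hr, map_sum, zero_add]
    _ = ∑ j ∈ I, L (Pi.single j 1) * p j := by
        refine Finset.sum_congr rfl (fun j _ => ?_)
        have : Pi.single j (p j) = p j • (Pi.single j 1 : ι → ℝ) := by
          funext j'
          simp [Pi.single_apply, mul_ite]
        rw [this, map_smul, smul_eq_mul, mul_comm]

end Aux5
section Aux6

variable {S : Type*} [MeasurableSpace S] {V : Type*} [AddCommGroup V] [Module ℝ V]

lemma key_construction (X : Set V) (hX : Convex ℝ X) {u : V → ℝ}
    (haff : IsAffineOn u X) {x y : V} (hx : x ∈ X) (hy : y ∈ X) (hxy : u x < u y)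
    (I : Finset (MSet S)) (a : MSet S → ℝ) (t₀ : ℝ) :
    ∃ (f : S → V) (z : V), IsAct X f ∧ z ∈ X ∧ ∃ α : ℝ, 0 < α ∧ ∃ β : ℝ,
      (∀ p ∈ ProbCharges S, EU u f p = α * (∑ j ∈ I, a j * p j) + β) ∧
      u z = α * t₀ + β := by
  classical
  set ι := ({j // j ∈ I} → Bool) with hι
  haveI : Nonempty ι := ⟨fun _ => true⟩
  set idx : S → ι := fun s j => if s ∈ (j : MSet S).1 then true else false with hidx
  have hidx_iff : ∀ (s : S) (j : {j // j ∈ I}), idx s j = true ↔ s ∈ (j : MSet S).1 := by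
    intro s j
    rw [hidx]
    by_cases h : s ∈ (j : MSet S).1 <;> simp [h]
  have hmem_iff : ∀ (s : S) (σ : ι) (j : {j // j ∈ I}),
      (s ∈ (if σ j then ((j : MSet S).1 : Set S) else ((j : MSet S).1)ᶜ))
        ↔ idx s j = σ j := by
    intro s σ j
    by_cases hs : s ∈ (j : MSet S).1 <;> cases hb : σ j <;> simp [hidx, hs, hb] <;> exact hs
  have hBset : ∀ σ : ι, idx ⁻¹' {σ}
      = ⋂ j : {j // j ∈ I}, (if σ j then ((j : MSet S).1 : Set S) else ((j : MSet S).1)ᶜ) := by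
    intro σ
    ext s
    simp only [Set.mem_preimage, Set.mem_singleton_iff, Set.mem_iInter]
    rw [funext_iff]
    exact forall_congr' (fun j => (hmem_iff s σ j).symm)
  have hBmeas : ∀ σ : ι, MeasurableSet (idx ⁻¹' {σ}) := by
    intro σ
    rw [hBset σ]
    refine MeasurableSet.iInter (fun j => ?_)
    cases hb : σ j
    · simp only [hb, Bool.false_eq_true, if_false]
      exact ((j : MSet S).2).compl
    · simp only [hb, if_true]
      exact (j : MSet S).2
  set c : ι → ℝ := fun σ => ∑ j : {j // j ∈ I}, (if σ j then a (j : MSet S) else 0) with hc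
  -- regrouping identity
  have hregroup : ∀ p ∈ ProbCharges S,
      ∑ σ : ι, c σ * p ⟨idx ⁻¹' {σ}, hBmeas σ⟩ = ∑ j ∈ I, a j * p j := by
    intro p hp
    have step1 : ∀ σ : ι, c σ * p ⟨idx ⁻¹' {σ}, hBmeas σ⟩
        = ∑ j : {j // j ∈ I},
            (if σ j then a (j : MSet S) * p ⟨idx ⁻¹' {σ}, hBmeas σ⟩ else 0) := by
      intro σ
      rw [hc, Finset.sum_mul]
      exact Finset.sum_congr rfl (fun j _ => by split <;> simp
        )
    rw [Finset.sum_congr rfl (fun σ _ => step1 σ), Finset.sum_comm]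
    have step2 : ∀ j : {j // j ∈ I},
        ∑ σ : ι, (if σ j then a (j : MSet S) * p ⟨idx ⁻¹' {σ}, hBmeas σ⟩ else 0)
          = a (j : MSet S) * p (j : MSet S) := by
      intro j
      rw [← Finset.sum_filter]
      have hsum : ∑ σ ∈ Finset.univ.filter (fun σ : ι => σ j = true),
          p ⟨idx ⁻¹' {σ}, hBmeas σ⟩ = p (j : MSet S) := by
        rw [← pc_biUnion hp _ _ (fun σ => hBmeas σ) (fun σ1 _ σ2 _ h12 =>
          Set.disjoint_left.2 (fun s hs1 hs2 => h12 (by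
            simp only [Set.mem_preimage, Set.mem_singleton_iff] at hs1 hs2
            rw [← hs1, ← hs2])))]
        refine pc_congr p _ _ ?_
        ext s
        simp only [Set.mem_iUnion, Finset.mem_filter, Finset.mem_univ, true_and,
          Set.mem_preimage, Set.mem_singleton_iff]
        constructor
        · rintro ⟨σ, hσj, rfl⟩
          exact (hidx_iff s j).1 hσj
        · intro hs
          refine ⟨idx s, (hidx_iff s j).2 hs, rfl⟩
      rw [← hsum, Finset.mul_sum]
    rw [Finset.sum_congr rfl (fun j _ => step2 j)]
    rw [← Finset.sum_attach I (fun j => a j * p j)]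
    rfl
  have htotal : ∀ p ∈ ProbCharges S, ∑ σ : ι, p ⟨idx ⁻¹' {σ}, hBmeas σ⟩ = 1 := by
    intro p hp
    rw [← pc_biUnion hp Finset.univ _ (fun σ => hBmeas σ) (fun σ1 _ σ2 _ h12 =>
      Set.disjoint_left.2 (fun s hs1 hs2 => h12 (by
        simp only [Set.mem_preimage, Set.mem_singleton_iff] at hs1 hs2
        rw [← hs1, ← hs2])))]
    rw [pc_congr p _ MeasurableSet.univ (by
      ext s
      simp only [Set.mem_iUnion, Set.mem_univ, iff_true, Finset.mem_univ,
        Set.mem_preimage, Set.mem_singleton_iff]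
      exact ⟨idx s, trivial, rfl⟩)]
    exact hp.2.1
  -- scaling constants
  set m : ℝ := min t₀ (Finset.univ.inf' Finset.univ_nonempty c) with hm
  set M : ℝ := max t₀ (Finset.univ.sup' Finset.univ_nonempty c) + 1 with hM
  have hmM : m < M := by
    have h1 : m ≤ t₀ := min_le_left _ _
    have h2 : t₀ ≤ M - 1 := by
      rw [hM]; have := le_max_left t₀ (Finset.univ.sup' Finset.univ_nonempty c); linarith
    linarith
  have hcm : ∀ σ, m ≤ c σ := fun σ =>
    le_trans (min_le_right _ _) (Finset.inf'_le c (Finset.mem_univ σ))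
  have hcM : ∀ σ, c σ ≤ M := fun σ => by
    have := Finset.le_sup' c (Finset.mem_univ σ)
    have h2 := le_max_right t₀ (Finset.univ.sup' Finset.univ_nonempty c)
    rw [hM]; linarith
  have ht₀m : m ≤ t₀ := min_le_left _ _
  have ht₀M : t₀ ≤ M := by
    have := le_max_left t₀ (Finset.univ.sup' Finset.univ_nonempty c); rw [hM]; linarith
  set d : ℝ := u y - u x with hd
  have hdpos : 0 < d := by rw [hd]; linarith
  set α : ℝ := d / (M - m) with hα
  have hαpos : 0 < α := div_pos hdpos (by linarith)
  set β : ℝ := u x - α * m with hβ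
  set tt : ι → ℝ := fun σ => (c σ - m) / (M - m) with htt
  have htt01 : ∀ σ, 0 ≤ tt σ ∧ tt σ ≤ 1 := by
    intro σ
    constructor
    · exact div_nonneg (by linarith [hcm σ]) (by linarith)
    · rw [div_le_one (by linarith)]; linarith [hcM σ]
  set pt : ℝ → V := fun t => t • y + (1 - t) • x with hptdef
  have hpt_mem : ∀ t : ℝ, 0 ≤ t → t ≤ 1 → pt t ∈ X := fun t h0 h1 =>
    hX hy hx h0 (by linarith) (by ring)
  have hpt_u : ∀ t : ℝ, 0 ≤ t → t ≤ 1 → u (pt t) = u x + t * d := by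
    intro t h0 h1
    rw [hptdef]
    simp only
    rw [haff y hy x hx t h0 h1, hd]
    ring
  set f : S → V := fun s => pt (tt (idx s)) with hf
  set t₁ : ℝ := (t₀ - m) / (M - m) with ht₁
  have ht₁01 : 0 ≤ t₁ ∧ t₁ ≤ 1 := by
    constructor
    · exact div_nonneg (by linarith) (by linarith)
    · rw [ht₁, div_le_one (by linarith)]; linarith
  set z : V := pt t₁ with hz
  have hact : IsAct X f := by
    refine ⟨fun s => hpt_mem _ (htt01 _).1 (htt01 _).2, ?_, ?_⟩
    · exact (Set.finite_range (fun σ : ι => pt (tt σ))).subset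
        (by rintro v ⟨s, rfl⟩; exact ⟨idx s, rfl⟩)
    · intro v
      have : f ⁻¹' {v} = ⋃ σ ∈ ((fun σ : ι => pt (tt σ)) ⁻¹' {v}), idx ⁻¹' {σ} := by
        rw [Set.biUnion_preimage_singleton]
        rfl
      rw [this]
      exact MeasurableSet.biUnion (Set.to_countable _) (fun σ _ => hBmeas σ)
  have hv_eq : ∀ σ : ι, u (pt (tt σ)) = α * c σ + β := by
    intro σ
    rw [hpt_u _ (htt01 σ).1 (htt01 σ).2, htt, hβ, hα]
    field_simp
    ring
  refine ⟨f, z, hact, hpt_mem _ ht₁01.1 ht₁01.2, α, hαpos, β, ?_, ?_⟩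
  · intro p hp
    have h1 : EU u f p = ∑ σ : ι, (u (pt (tt σ))) * p ⟨idx ⁻¹' {σ}, hBmeas σ⟩ :=
      fInt_comp idx hBmeas (fun σ => u (pt (tt σ))) hp
    rw [h1]
    rw [Finset.sum_congr rfl (fun σ _ => by rw [hv_eq σ])]
    have expand : ∀ σ : ι, (α * c σ + β) * p ⟨idx ⁻¹' {σ}, hBmeas σ⟩
        = α * (c σ * p ⟨idx ⁻¹' {σ}, hBmeas σ⟩) + β * p ⟨idx ⁻¹' {σ}, hBmeas σ⟩ := by
      intro σ; ring
    rw [Finset.sum_congr rfl (fun σ _ => expand σ), Finset.sum_add_distrib,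
      ← Finset.mul_sum, ← Finset.mul_sum, hregroup p hp, htotal p hp, mul_one]
  · rw [hz, hpt_u _ ht₁01.1 ht₁01.2, ht₁, hβ, hα]
    field_simp
    ring

end Aux6
section Aux7

variable {S : Type*} [MeasurableSpace S] {V : Type*} [AddCommGroup V] [Module ℝ V]

lemma isAct_const {X : Set V} {z : V} (hz : z ∈ X) : IsAct X (constAct S z) := by
  refine ⟨fun _ => hz, (Set.finite_singleton z).subset (by rintro v ⟨s, rfl⟩; rfl), ?_⟩
  intro v
  by_cases h : z = v
  · have : (constAct S z) ⁻¹' {v} = Set.univ := by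
      ext s; simp [constAct, h]
    rw [this]; exact MeasurableSet.univ
  · have : (constAct S z) ⁻¹' {v} = ∅ := by
      ext s; simp [constAct, h]
    rw [this]; exact MeasurableSet.empty

end Aux7
section Statement

variable {S : Type*} [MeasurableSpace S] [Nonempty S]
variable {V : Type*} [AddCommGroup V] [Module ℝ V]

/-- Proposition 3(i): with experts `i ∈ {1,…,n}` holding
Bewley preferences `(u, Cᵢ)` and a DM holding either a concordant
hope-and-prepare preference `(u, C₀, C₀)` or a Bewley preference `(u, C₀)`,
the Pareto condition holds iff `C₀ ⊆ co(⋃ᵢ Cᵢ)`. -/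
theorem statement8 (X : Set V) (hX : Convex ℝ X) (hX2 : ∃ x ∈ X, ∃ y ∈ X, x ≠ y)
    {n : ℕ} (hn : 0 < n)
    (Rexp : Fin n → (S → V) → (S → V) → Prop) (R0 : (S → V) → (S → V) → Prop)
    (u : V → ℝ) (Ci : Fin n → Set (MSet S → ℝ)) (C0 : Set (MSet S → ℝ))
    (hexp : ∀ i, IsBewleyRep X (Rexp i) u (Ci i))
    (hdm : IsHPRep X R0 u C0 C0 ∨ IsBewleyRep X R0 u C0) :
    (∀ f g, IsAct X f → IsAct X g → (∀ i, Rexp i f g) → R0 f g) ↔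
      C0 ⊆ convexHull ℝ (⋃ i, Ci i) := by
  classical
  have i0 : Fin n := ⟨0, hn⟩
  obtain ⟨haff, hnc, -, -, -, -, -⟩ := hexp i0
  have hC0ne : C0.Nonempty := by
    rcases hdm with h | h
    · exact h.2.2.1
    · exact h.2.2.1
  have hC0pc : C0 ⊆ ProbCharges S := by
    rcases hdm with h | h
    · exact h.2.2.2.2.1
    · exact h.2.2.2.1
  have hC0comp : IsCompact C0 := by
    rcases hdm with h | h
    · exact h.2.2.2.2.2.2.1
    · exact h.2.2.2.2.1
  constructor
  · -- Pareto implies inclusion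
    intro hpar q hqC0
    by_contra hqK
    have hKcomp : IsCompact (convexHull ℝ (⋃ i, Ci i)) :=
      isCompact_convexHull_iUnion hn Ci (fun i => (hexp i).2.2.1)
        (fun i => (hexp i).2.2.2.2.1) (fun i => (hexp i).2.2.2.2.2.1)
    obtain ⟨L, t₀, hLlt, hLq⟩ := geometric_hahn_banach_closed_point
      (convex_convexHull ℝ _) hKcomp.isClosed hqK
    obtain ⟨I, a, hLa⟩ := clm_pi_repr L
    obtain ⟨x, hx, y, hy, hxy⟩ : ∃ x ∈ X, ∃ y ∈ X, u x < u y := by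
      obtain ⟨x0, hx0, y0, hy0, hne⟩ := hnc
      rcases hne.lt_or_gt with h | h
      · exact ⟨x0, hx0, y0, hy0, h⟩
      · exact ⟨y0, hy0, x0, hx0, h⟩
    obtain ⟨f, z, hactf, hzX, α, hαpos, β, hEUf, huz⟩ :=
      key_construction X hX haff hx hy hxy I a t₀
    have hgact : IsAct X (constAct S z) := isAct_const hzX
    have hEUfL : ∀ p ∈ ProbCharges S, EU u f p = α * L p + β := by
      intro p hp
      rw [hEUf p hp, hLa p]
    have hexp_pref : ∀ i, Rexp i (constAct S z) f := by
      intro i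
      refine ((hexp i).2.2.2.2.2.2 _ _ hgact hactf).2 (fun p hp => ?_)
      have hppc : p ∈ ProbCharges S := (hexp i).2.2.2.1 hp
      rw [hEUfL p hppc, EU_const hppc u z, huz]
      have hpK : L p < t₀ := hLlt p (subset_convexHull ℝ _ (Set.mem_iUnion.2 ⟨i, hp⟩))
      nlinarith
    have hR0 := hpar _ _ hgact hactf hexp_pref
    have hEUfq : EU u f q = α * L q + β := hEUfL q (hC0pc hqC0)
    have hEUgq : u z < EU u f q := by
      rw [hEUfq, huz]; nlinarith
    rcases hdm with hHP | hB
    · have h2 := ((hHP.2.2.2.2.2.2.2.2.2.2.2 _ _ hgact hactf).1 hR0).2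
      have h3 : maxEU u C0 (constAct S z) = u z := maxEU_const hC0ne hC0pc u z
      have h4 : EU u f q ≤ maxEU u C0 f := le_maxEU hactf u hC0comp hqC0
      rw [h3] at h2
      linarith
    · have h2 := ((hB.2.2.2.2.2.2 _ _ hgact hactf).1 hR0) q hqC0
      rw [EU_const (hC0pc hqC0) u z] at h2
      linarith
  · -- inclusion implies Pareto
    intro hsub f g hf hg hpref
    have hdom : ∀ p ∈ ⋃ i, Ci i, EU u g p < EU u f p := by
      intro p hp
      obtain ⟨i, hpi⟩ := Set.mem_iUnion.1 hp
      exact ((hexp i).2.2.2.2.2.2 f g hf hg).1 (hpref i) p hpi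
    have hC0dom : ∀ p ∈ C0, EU u g p < EU u f p :=
      fun p hp => hull_dominance hf hg u _ hdom p (hsub hp)
    rcases hdm with hHP | hB
    · exact (hHP.2.2.2.2.2.2.2.2.2.2.2 f g hf hg).2
        ⟨minEU_lt hf hg u hC0ne hC0comp hC0dom, maxEU_lt hf hg u hC0ne hC0comp hC0dom⟩
    · exact (hB.2.2.2.2.2.2 f g hf hg).2 hC0dom

end Statement
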